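/- Let φ(t) := (2π)^{-1/2} e^{-t²/2}, Φ(z) := ∫_{-∞}^{z} φ(t) dt, and for ρ ∈ (−1,1) let h_ρ(x,y) := (2π√(1−ρ²))^{-1} exp(−(x² − 2ρxy + y²)/(2(1−ρ²))) and G(ρ; a, b) := ∫_{-∞}^{a} ∫_{-∞}^{b} h_ρ(x, y) dy dx − Φ(a)Φ(b). Let ρ : ℤ → ℝ be a sequence with |ρ_k| < 1 for all k ≠ 0 and such that ∑_{k∈ℤ, k≠0} |ρ_k|/|k| < ∞. Then for all a, b ∈ ℝ the family k ↦ |G(ρ_k; a, b)|/|k|, k ∈ ℤ ∖ {0}, is summable. -/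

import Mathlib

open Real MeasureTheory

/-- The standard normal density `φ(t) = (2π)^{-1/2} e^{-t²/2}`. -/
noncomputable def stdNormalPDF (t : ℝ) : ℝ := (Real.sqrt (2 * π))⁻¹ * Real.exp (-t ^ 2 / 2)

/-- The standard normal distribution function `Φ(z) = ∫_{-∞}^z φ`. -/
noncomputable def stdNormalCDF (z : ℝ) : ℝ := ∫ t in Set.Iic z, stdNormalPDF t

/-- The bivariate standard normal density with correlation `ρ`. -/
noncomputable def biNormPDF (ρ x y : ℝ) : ℝ :=
  (2 * π * Real.sqrt (1 - ρ ^ 2))⁻¹ *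
    Real.exp (-(x ^ 2 - 2 * ρ * x * y + y ^ 2) / (2 * (1 - ρ ^ 2)))

/-- `G(ρ; a, b)`: the bivariate normal joint distribution function minus the product of
its marginals. -/
noncomputable def Gfun (ρ a b : ℝ) : ℝ :=
  (∫ x in Set.Iic a, ∫ y in Set.Iic b, biNormPDF ρ x y) - stdNormalCDF a * stdNormalCDF b


lemma gauss_int {b : ℝ} (hb : 0 < b) : ∫ x : ℝ, Real.exp (-x ^ 2 / (2 * b)) = Real.sqrt (2 * π * b) := by
  have h := integral_gaussian (2 * b)⁻¹
  have h1 : ∀ x : ℝ, -(2 * b)⁻¹ * x ^ 2 = -x ^ 2 / (2 * b) := by intro x; field_simp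
  simp_rw [h1] at h
  rw [h]
  congr 1
  field_simp

lemma gauss_integrable {b : ℝ} (hb : 0 < b) : Integrable (fun x : ℝ => Real.exp (-x ^ 2 / (2 * b))) := by
  have h1 : ∀ x : ℝ, -x ^ 2 / (2 * b) = -(2 * b)⁻¹ * x ^ 2 := by intro x; field_simp
  simp_rw [h1]
  exact integrable_exp_neg_mul_sq (by positivity)

lemma phi_integrable : Integrable stdNormalPDF := by
  unfold stdNormalPDF
  refine Integrable.const_mul ?_ _
  have := gauss_integrable (b := 1) one_pos
  simpa using this

lemma phi_nonneg (t : ℝ) : 0 ≤ stdNormalPDF t := by unfold stdNormalPDF; positivity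

lemma phi_total : ∫ t : ℝ, stdNormalPDF t = 1 := by
  unfold stdNormalPDF
  rw [integral_const_mul]
  have := gauss_int (b := 1) one_pos
  simp only [mul_one] at this
  rw [this, inv_mul_cancel₀]
  positivity

lemma cdf_nonneg (z : ℝ) : 0 ≤ stdNormalCDF z :=
  setIntegral_nonneg measurableSet_Iic fun t _ => phi_nonneg t

lemma cdf_le_one (z : ℝ) : stdNormalCDF z ≤ 1 := by
  rw [← phi_total]
  exact setIntegral_le_integral phi_integrable (Filter.Eventually.of_forall phi_nonneg)

lemma biNorm_nonneg (ρ x y : ℝ) : 0 ≤ biNormPDF ρ x y := by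
  unfold biNormPDF
  have h1 : 0 ≤ Real.sqrt (1 - ρ ^ 2) := Real.sqrt_nonneg _
  positivity

lemma biNorm_split {ρ : ℝ} (hρ : |ρ| < 1) (x y : ℝ) :
    biNormPDF ρ x y = (2 * π * Real.sqrt (1 - ρ ^ 2))⁻¹ * Real.exp (-x ^ 2 / 2) *
      Real.exp (-(y - ρ * x) ^ 2 / (2 * (1 - ρ ^ 2))) := by
  have hr2 : (0:ℝ) < 1 - ρ ^ 2 := by
    have := abs_lt.mp hρ
    nlinarith
  unfold biNormPDF
  conv_rhs => rw [mul_assoc, ← Real.exp_add]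
  congr 1
  field_simp
  ring

lemma biNorm_fiber_integrable {ρ : ℝ} (hρ : |ρ| < 1) (x : ℝ) :
    Integrable (fun y => biNormPDF ρ x y) := by
  have hr2 : (0:ℝ) < 1 - ρ ^ 2 := by
    have := abs_lt.mp hρ; nlinarith
  simp_rw [biNorm_split hρ x]
  refine Integrable.const_mul ?_ _
  exact (gauss_integrable hr2).comp_sub_right (ρ * x)

lemma biNorm_fiber_integral {ρ : ℝ} (hρ : |ρ| < 1) (x : ℝ) :
    ∫ y : ℝ, biNormPDF ρ x y = stdNormalPDF x := by
  have hr2 : (0:ℝ) < 1 - ρ ^ 2 := by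
    have := abs_lt.mp hρ; nlinarith
  simp_rw [biNorm_split hρ x]
  rw [integral_const_mul]
  rw [integral_sub_right_eq_self (fun y : ℝ => Real.exp (-y ^ 2 / (2 * (1 - ρ ^ 2)))) (ρ * x)]
  rw [gauss_int hr2]
  unfold stdNormalPDF
  have hs : Real.sqrt (2 * π * (1 - ρ ^ 2)) = Real.sqrt (2 * π) * Real.sqrt (1 - ρ ^ 2) := by
    rw [← Real.sqrt_mul (by positivity)]
  rw [hs]
  have h2π : Real.sqrt (2 * π) * Real.sqrt (2 * π) = 2 * π := Real.mul_self_sqrt (by positivity)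
  have hsr : (0:ℝ) < Real.sqrt (1 - ρ ^ 2) := Real.sqrt_pos.mpr hr2
  have hsq : (0:ℝ) < Real.sqrt (2 * π) := Real.sqrt_pos.mpr (by positivity)
  rw [← h2π]
  field_simp
  ring
  rw [Real.sqrt_sq (Real.sqrt_nonneg _)]

lemma F_sm (ρ b : ℝ) :
    StronglyMeasurable (fun x => ∫ y in Set.Iic b, biNormPDF ρ x y) := by
  have hc : Continuous (fun p : ℝ × ℝ => biNormPDF ρ p.1 p.2) := by
    unfold biNormPDF; fun_prop
  have h1 : StronglyMeasurable
      (fun p : ℝ × ℝ => Set.indicator {q : ℝ × ℝ | q.2 ∈ Set.Iic b}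
        (fun q => biNormPDF ρ q.1 q.2) p) :=
    hc.stronglyMeasurable.indicator (measurable_snd measurableSet_Iic)
  have h2 := h1.integral_prod_right' (ν := volume)
  have heq : (fun x => ∫ y in Set.Iic b, biNormPDF ρ x y)
      = fun x => ∫ y : ℝ, Set.indicator {q : ℝ × ℝ | q.2 ∈ Set.Iic b}
          (fun q => biNormPDF ρ q.1 q.2) (x, y) := by
    funext x
    rw [← integral_indicator measurableSet_Iic]
    congr 1
  rw [heq]
  exact h2

lemma F_nonneg (ρ b x : ℝ) : 0 ≤ ∫ y in Set.Iic b, biNormPDF ρ x y :=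
  setIntegral_nonneg measurableSet_Iic fun y _ => biNorm_nonneg ρ x y

lemma F_le_phi {ρ : ℝ} (hρ : |ρ| < 1) (b x : ℝ) :
    ∫ y in Set.Iic b, biNormPDF ρ x y ≤ stdNormalPDF x := by
  rw [← biNorm_fiber_integral hρ x]
  exact setIntegral_le_integral (biNorm_fiber_integrable hρ x)
    (Filter.Eventually.of_forall fun y => biNorm_nonneg ρ x y)

lemma mass_nonneg (ρ a b : ℝ) :
    0 ≤ ∫ x in Set.Iic a, ∫ y in Set.Iic b, biNormPDF ρ x y :=
  setIntegral_nonneg measurableSet_Iic fun x _ => F_nonneg ρ b x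

lemma mass_le_one {ρ : ℝ} (hρ : |ρ| < 1) (a b : ℝ) :
    (∫ x in Set.Iic a, ∫ y in Set.Iic b, biNormPDF ρ x y) ≤ 1 := by
  have h1 : (∫ x in Set.Iic a, ∫ y in Set.Iic b, biNormPDF ρ x y)
      ≤ ∫ x in Set.Iic a, stdNormalPDF x := by
    refine integral_mono_of_nonneg (Filter.Eventually.of_forall fun x => F_nonneg ρ b x)
      phi_integrable.integrableOn (Filter.Eventually.of_forall fun x => F_le_phi hρ b x)
  calc _ ≤ ∫ x in Set.Iic a, stdNormalPDF x := h1
    _ = stdNormalCDF a := rfl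
    _ ≤ 1 := cdf_le_one a

lemma F_integrableOn {ρ : ℝ} (hρ : |ρ| < 1) (a b : ℝ) :
    IntegrableOn (fun x => ∫ y in Set.Iic b, biNormPDF ρ x y) (Set.Iic a) := by
  refine Integrable.mono' phi_integrable.integrableOn
    (F_sm ρ b).aestronglyMeasurable.restrict
    (Filter.Eventually.of_forall fun x => ?_)
  rw [Real.norm_eq_abs, abs_of_nonneg (F_nonneg ρ b x)]
  exact F_le_phi hρ b x

lemma exp_diff_aux {m u v : ℝ} (hu : m ≤ u) (huv : u ≤ v) :
    Real.exp (-u) - Real.exp (-v) ≤ (v - u) * Real.exp (-m) := by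
  have h1 : Real.exp (-u) ≤ Real.exp (-m) := Real.exp_le_exp.mpr (by linarith)
  have h2 : Real.exp (-u) - Real.exp (-v) = Real.exp (-u) * (1 - Real.exp (u - v)) := by
    rw [mul_sub, mul_one, ← Real.exp_add]; ring_nf
  have h3 : 1 - Real.exp (u - v) ≤ v - u := by
    have := Real.add_one_le_exp (u - v); linarith
  have h4 : 0 ≤ 1 - Real.exp (u - v) := by
    have : Real.exp (u - v) ≤ 1 := Real.exp_le_one_iff.mpr (by linarith)
    linarith
  rw [h2]
  calc Real.exp (-u) * (1 - Real.exp (u - v)) ≤ Real.exp (-m) * (v - u) :=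
        mul_le_mul h1 h3 h4 (Real.exp_pos _).le
    _ = (v - u) * Real.exp (-m) := by ring

lemma exp_diff_le {u v m : ℝ} (hu : m ≤ u) (hv : m ≤ v) :
    |Real.exp (-u) - Real.exp (-v)| ≤ |u - v| * Real.exp (-m) := by
  rcases le_total u v with h | h
  · rw [abs_of_nonneg (by have := Real.exp_le_exp.mpr (neg_le_neg h); linarith),
      abs_of_nonpos (by linarith)]
    have := exp_diff_aux hu h
    linarith
  · rw [abs_of_nonpos (by have := Real.exp_le_exp.mpr (neg_le_neg h); linarith),
      abs_of_nonneg (by linarith : (0:ℝ) ≤ u - v)]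
    have := exp_diff_aux hv h
    linarith

set_option maxHeartbeats 1000000 in
lemma key_est {ρ : ℝ} (hρ : |ρ| ≤ 1/2) (x y : ℝ) :
    |biNormPDF ρ x y - biNormPDF 0 x y| ≤
      12 * |ρ| * (Real.exp (-x ^ 2 / 6) * Real.exp (-y ^ 2 / 6)) := by
  obtain ⟨hA1, hA2⟩ := abs_le.mp hρ
  have hAnn : 0 ≤ |ρ| := abs_nonneg ρ
  have hsqA : ρ ^ 2 = |ρ| ^ 2 := (sq_abs ρ).symm
  have hρ2 : ρ ^ 2 ≤ 1/4 := by nlinarith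
  set s : ℝ := x ^ 2 + y ^ 2 with hs_def
  have hs : 0 ≤ s := by positivity
  set r2 : ℝ := 1 - ρ ^ 2 with hr2_def
  have hr2a : 3/4 ≤ r2 := by rw [hr2_def]; linarith
  have hr2b : r2 ≤ 1 := by rw [hr2_def]; nlinarith [sq_nonneg ρ]
  have hr2pos : 0 < r2 := by linarith
  set sr : ℝ := Real.sqrt r2 with hsr_def
  have hsr0 : 0 ≤ sr := Real.sqrt_nonneg _
  have hsrsq : sr ^ 2 = r2 := Real.sq_sqrt hr2pos.le
  have hsra : 3/4 ≤ sr := by nlinarith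
  have hsrb : sr ≤ 1 := by nlinarith
  have hπ : (3:ℝ) < π := Real.pi_gt_three
  set q : ℝ := (x ^ 2 - 2 * ρ * x * y + y ^ 2) / (2 * r2) with hq_def
  have h2xy : 2 * (x * y) ≤ s := by nlinarith [sq_nonneg (x - y)]
  have h2xy' : -s ≤ 2 * (x * y) := by nlinarith [sq_nonneg (x + y)]
  have habs : |ρ * (2 * (x * y))| ≤ |ρ| * s := by
    rw [abs_mul]
    exact mul_le_mul_of_nonneg_left (abs_le.mpr ⟨h2xy', h2xy⟩) hAnn
  obtain ⟨hx1, hx2⟩ := abs_le.mp habs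
  have hq14 : s / 4 ≤ q := by
    rw [hq_def, le_div_iff₀ (by linarith : (0:ℝ) < 2 * r2)]
    nlinarith [mul_le_mul_of_nonneg_right hr2b (by linarith : (0:ℝ) ≤ s)]
  have hq0 : s / 4 ≤ s / 2 := by linarith
  -- |q - s/2| ≤ s * |ρ|
  have key1 : q - s / 2 = (ρ ^ 2 * s - ρ * (2 * (x * y))) / (2 * r2) := by
    rw [hq_def, hr2_def, hs_def]
    have hne : (1:ℝ) - ρ ^ 2 ≠ 0 := (by linarith : (0:ℝ) < 1 - ρ ^ 2).ne'
    field_simp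
    ring
  have hqq : |q - s / 2| ≤ s * |ρ| := by
    rw [key1, abs_le]
    have h2r2 : (0:ℝ) < 2 * r2 := by linarith
    have haux : ρ ^ 2 * s ≤ 1/2 * |ρ| * s := by
      rw [hsqA]
      nlinarith [abs_le.mpr ⟨hA1, hA2⟩, mul_nonneg hAnn hs]
    constructor
    · rw [le_div_iff₀ h2r2]
      nlinarith [mul_le_mul_of_nonneg_right hρ2 hs,
        mul_le_mul_of_nonneg_left hr2a (mul_nonneg hs hAnn)]
    · rw [div_le_iff₀ h2r2]
      nlinarith [mul_le_mul_of_nonneg_right hρ2 hs,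
        mul_le_mul_of_nonneg_left hr2a (mul_nonneg hs hAnn)]
  -- rewrite densities
  have hb1 : biNormPDF ρ x y = (2 * π * sr)⁻¹ * Real.exp (-q) := by
    unfold biNormPDF
    rw [hq_def, neg_div]
  have hb0 : biNormPDF 0 x y = (2 * π)⁻¹ * Real.exp (-(s / 2)) := by
    rw [hs_def]
    unfold biNormPDF
    rw [show (1:ℝ) - 0 ^ 2 = 1 by norm_num, Real.sqrt_one, mul_one]
    congr 1
    ring
  -- coefficient bound
  have hc0 : (0:ℝ) < 2 * π * sr := by positivity
  have hcdiff : (2 * π * sr)⁻¹ - (2 * π)⁻¹ = (1 - sr) / (2 * π * sr) := by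
    field_simp
  have h1sr : 1 - sr ≤ ρ ^ 2 := by nlinarith
  have hcle : (2 * π * sr)⁻¹ - (2 * π)⁻¹ ≤ |ρ| := by
    rw [hcdiff, div_le_iff₀ hc0]
    nlinarith
  have hcge : (0:ℝ) ≤ (2 * π * sr)⁻¹ - (2 * π)⁻¹ := by
    rw [hcdiff]
    apply div_nonneg (by linarith) (by positivity)
  -- exponential bounds
  have hexpq : Real.exp (-q) ≤ Real.exp (-(s / 4)) :=
    Real.exp_le_exp.mpr (by linarith)
  have hediff : |Real.exp (-q) - Real.exp (-(s / 2))| ≤ s * |ρ| * Real.exp (-(s / 4)) := by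
    calc |Real.exp (-q) - Real.exp (-(s / 2))| ≤ |q - s / 2| * Real.exp (-(s / 4)) :=
          exp_diff_le hq14 hq0
      _ ≤ s * |ρ| * Real.exp (-(s / 4)) :=
          mul_le_mul_of_nonneg_right hqq (Real.exp_pos _).le
  -- assemble
  have hstep : |biNormPDF ρ x y - biNormPDF 0 x y| ≤ (1 + s) * |ρ| * Real.exp (-(s / 4)) := by
    rw [hb1, hb0]
    have hdecomp : (2 * π * sr)⁻¹ * Real.exp (-q) - (2 * π)⁻¹ * Real.exp (-(s / 2))
        = ((2 * π * sr)⁻¹ - (2 * π)⁻¹) * Real.exp (-q)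
          + (2 * π)⁻¹ * (Real.exp (-q) - Real.exp (-(s / 2))) := by ring
    rw [hdecomp]
    have hinv : (2 * π)⁻¹ ≤ 1 := by
      rw [inv_le_one_iff₀]; right; linarith
    calc |((2 * π * sr)⁻¹ - (2 * π)⁻¹) * Real.exp (-q)
          + (2 * π)⁻¹ * (Real.exp (-q) - Real.exp (-(s / 2)))|
        ≤ |((2 * π * sr)⁻¹ - (2 * π)⁻¹) * Real.exp (-q)|
          + |(2 * π)⁻¹ * (Real.exp (-q) - Real.exp (-(s / 2)))| := abs_add_le _ _
      _ = ((2 * π * sr)⁻¹ - (2 * π)⁻¹) * Real.exp (-q)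
          + (2 * π)⁻¹ * |Real.exp (-q) - Real.exp (-(s / 2))| := by
          rw [abs_mul, abs_mul, abs_of_nonneg hcge, abs_of_nonneg (Real.exp_pos _).le,
            abs_of_nonneg (by positivity : (0:ℝ) ≤ (2 * π)⁻¹)]
      _ ≤ |ρ| * Real.exp (-(s / 4)) + 1 * (s * |ρ| * Real.exp (-(s / 4))) := by
          gcongr
      _ = (1 + s) * |ρ| * Real.exp (-(s / 4)) := by ring
  -- final comparison
  have h12 : 1 + s ≤ 12 * Real.exp (s / 12) := by
    nlinarith [Real.add_one_le_exp (s / 12)]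
  have hfin : (1 + s) * |ρ| * Real.exp (-(s / 4)) ≤
      12 * |ρ| * (Real.exp (-x ^ 2 / 6) * Real.exp (-y ^ 2 / 6)) := by
    have hprod : Real.exp (-x ^ 2 / 6) * Real.exp (-y ^ 2 / 6)
        = Real.exp (s / 12) * Real.exp (-(s / 4)) := by
      rw [← Real.exp_add, ← Real.exp_add]
      congr 1
      rw [hs_def]; ring
    rw [hprod]
    calc (1 + s) * |ρ| * Real.exp (-(s / 4))
        ≤ (12 * Real.exp (s / 12)) * |ρ| * Real.exp (-(s / 4)) := by
          gcongr
      _ = 12 * |ρ| * (Real.exp (s / 12) * Real.exp (-(s / 4))) := by ring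
  linarith

noncomputable def C0 : ℝ := ∫ x : ℝ, Real.exp (-x ^ 2 / 6)

lemma C0_integrable : Integrable (fun x : ℝ => Real.exp (-x ^ 2 / 6)) := by
  have h := gauss_integrable (b := 3) (by norm_num)
  simp only [show (2:ℝ) * 3 = 6 by norm_num] at h
  exact h

lemma C0_int : (∫ x : ℝ, Real.exp (-x ^ 2 / 6)) = C0 := rfl

lemma C0_nonneg : 0 ≤ C0 :=
  integral_nonneg fun x => (Real.exp_pos _).le

lemma biNorm_zero (x y : ℝ) : biNormPDF 0 x y = stdNormalPDF x * stdNormalPDF y := by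
  unfold biNormPDF stdNormalPDF
  rw [show (1:ℝ) - 0 ^ 2 = 1 by norm_num, Real.sqrt_one, mul_one]
  rw [mul_mul_mul_comm, ← Real.exp_add, ← mul_inv,
    Real.mul_self_sqrt (by positivity : (0:ℝ) ≤ 2 * π)]
  congr 1
  ring

lemma mass_zero (a b : ℝ) :
    (∫ x in Set.Iic a, ∫ y in Set.Iic b, biNormPDF 0 x y)
      = stdNormalCDF a * stdNormalCDF b := by
  have hinner : ∀ x : ℝ, (∫ y in Set.Iic b, biNormPDF 0 x y)
      = stdNormalPDF x * stdNormalCDF b := by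
    intro x
    simp_rw [biNorm_zero]
    rw [integral_const_mul]
    rfl
  simp_rw [hinner]
  rw [integral_mul_const]
  rfl

set_option maxHeartbeats 600000 in
lemma Gfun_small {ρ : ℝ} (hρ : |ρ| ≤ 1/2) (a b : ℝ) :
    |Gfun ρ a b| ≤ 12 * C0 ^ 2 * |ρ| := by
  have hρ1 : |ρ| < 1 := lt_of_le_of_lt hρ (by norm_num)
  have h0 : |(0:ℝ)| < 1 := by norm_num
  unfold Gfun
  rw [← mass_zero a b]
  have hFdiff : ∀ x : ℝ,
      ‖(∫ y in Set.Iic b, biNormPDF ρ x y) - ∫ y in Set.Iic b, biNormPDF 0 x y‖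
        ≤ 12 * |ρ| * C0 * Real.exp (-x ^ 2 / 6) := by
    intro x
    rw [← integral_sub (biNorm_fiber_integrable hρ1 x).integrableOn
      (biNorm_fiber_integrable h0 x).integrableOn]
    have hfull : Integrable (fun y : ℝ =>
        12 * |ρ| * (Real.exp (-x ^ 2 / 6) * Real.exp (-y ^ 2 / 6))) := by
      simpa [mul_assoc] using ((C0_integrable.const_mul (Real.exp (-x ^ 2 / 6))).const_mul
        (12 * |ρ|))
    calc ‖∫ y in Set.Iic b, (biNormPDF ρ x y - biNormPDF 0 x y)‖
        ≤ ∫ y in Set.Iic b, 12 * |ρ| * (Real.exp (-x ^ 2 / 6) * Real.exp (-y ^ 2 / 6)) :=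
          norm_integral_le_of_norm_le hfull.integrableOn
            (Filter.Eventually.of_forall fun y => by
              rw [Real.norm_eq_abs]; exact key_est hρ x y)
      _ ≤ ∫ y : ℝ, 12 * |ρ| * (Real.exp (-x ^ 2 / 6) * Real.exp (-y ^ 2 / 6)) :=
          setIntegral_le_integral hfull
            (Filter.Eventually.of_forall fun y => by positivity)
      _ = 12 * |ρ| * C0 * Real.exp (-x ^ 2 / 6) := by
          have hre : ∀ y : ℝ, 12 * |ρ| * (Real.exp (-x ^ 2 / 6) * Real.exp (-y ^ 2 / 6))
              = (12 * |ρ| * Real.exp (-x ^ 2 / 6)) * Real.exp (-y ^ 2 / 6) := fun y => by ring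
          simp_rw [hre]
          rw [integral_const_mul, C0_int]
          ring
  rw [← Real.norm_eq_abs,
    ← integral_sub (F_integrableOn hρ1 a b) (F_integrableOn h0 a b)]
  have hBfull : Integrable (fun x : ℝ => 12 * |ρ| * C0 * Real.exp (-x ^ 2 / 6)) :=
    C0_integrable.const_mul _
  calc ‖∫ x in Set.Iic a, ((∫ y in Set.Iic b, biNormPDF ρ x y)
          - ∫ y in Set.Iic b, biNormPDF 0 x y)‖
      ≤ ∫ x in Set.Iic a, 12 * |ρ| * C0 * Real.exp (-x ^ 2 / 6) :=
        norm_integral_le_of_norm_le hBfull.integrableOn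
          (Filter.Eventually.of_forall fun x => hFdiff x)
    _ ≤ ∫ x : ℝ, 12 * |ρ| * C0 * Real.exp (-x ^ 2 / 6) :=
        setIntegral_le_integral hBfull
          (Filter.Eventually.of_forall fun x =>
            mul_nonneg (mul_nonneg (by positivity) C0_nonneg) (Real.exp_pos _).le)
    _ = 12 * C0 ^ 2 * |ρ| := by
        rw [integral_const_mul, C0_int]
        ring

lemma Gfun_le_one {ρ : ℝ} (hρ : |ρ| < 1) (a b : ℝ) : |Gfun ρ a b| ≤ 1 := by
  unfold Gfun
  have h1 := mass_nonneg ρ a b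
  have h2 := mass_le_one hρ a b
  have h3 := cdf_nonneg a
  have h4 := cdf_nonneg b
  have h5 := cdf_le_one a
  have h6 := cdf_le_one b
  rw [abs_le]
  constructor <;> nlinarith

lemma Gfun_bound {ρ : ℝ} (hρ : |ρ| < 1) (a b : ℝ) :
    |Gfun ρ a b| ≤ (12 * C0 ^ 2 + 2) * |ρ| := by
  rcases le_or_gt |ρ| (1/2) with h | h
  · have := Gfun_small h a b
    nlinarith [abs_nonneg ρ, sq_nonneg C0]
  · have h1 := Gfun_le_one hρ a b
    nlinarith [abs_nonneg ρ, sq_nonneg C0]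


/-- if `ρ : ℤ → ℝ` satisfies `|ρ_k| < 1` for all `k ≠ 0` and
`∑_{k≠0} |ρ_k|/|k| < ∞`, then for all `a, b` the family `k ↦ |G(ρ_k; a, b)|/|k|`,
`k ≠ 0`, is summable. -/
theorem stmt13 (ρ : ℤ → ℝ)
    (h1 : ∀ k : ℤ, k ≠ 0 → |ρ k| < 1)
    (h2 : Summable fun k : {k : ℤ // k ≠ 0} => |ρ (k : ℤ)| / |((k : ℤ) : ℝ)|) :
    ∀ a b : ℝ,
      Summable fun k : {k : ℤ // k ≠ 0} => |Gfun (ρ (k : ℤ)) a b| / |((k : ℤ) : ℝ)| := by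
  intro a b
  refine Summable.of_nonneg_of_le (fun k => by positivity) (fun k => ?_)
    (h2.mul_left (12 * C0 ^ 2 + 2))
  have hk : (0:ℝ) < |((k : ℤ) : ℝ)| :=
    abs_pos.mpr (Int.cast_ne_zero.mpr k.2)
  rw [← mul_div_assoc]
  gcongr
  exact Gfun_bound (h1 k k.2) a b
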